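/- Let $m \le n$ be positive integers and let $a_1, a_2, \dots, a_n$ be a sequence of non-negative integers with $\sum_{i=1}^n a_i = n$. Then $\sum_{j=1}^{n-m+1} a_j a_{j+1} \cdots a_{j+m-1} \le (n/m)^m$. -/

import Mathlib

set_option maxHeartbeats 1000000

private lemma aux_mod (m j r : ℕ) (hm : 0 < m) (hr : r < m) :
    (j + ((r + m - j % m) % m)) % m = r := by
  have h2 : j % m ≤ j := Nat.mod_le _ _
  have h1 : j % m < m := Nat.mod_lt _ hm
  have hdm := Nat.div_add_mod j m
  rw [Nat.add_mod_mod]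
  have h3 : j + (r + m - j % m) = m * (j / m) + (r + m) := by omega
  rw [h3, Nat.mul_add_mod, Nat.add_mod_right, Nat.mod_eq_of_lt hr]

private lemma aux_uniq (m j i i' : ℕ) (h1 : j ≤ i) (h2 : i < j + m) (h3 : j ≤ i')
    (h4 : i' < j + m) (h5 : i % m = i' % m) : i = i' := by
  rcases le_total i i' with h | h
  · rcases Nat.eq_zero_or_pos (i' - i) with h0 | h0
    · omega
    · have hd : m ∣ i' - i := (Nat.modEq_iff_dvd' h).1 h5
      have := Nat.le_of_dvd h0 hd; omega
  · rcases Nat.eq_zero_or_pos (i - i') with h0 | h0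
    · omega
    · have hd : m ∣ i - i' := (Nat.modEq_iff_dvd' h).1 h5.symm
      have := Nat.le_of_dvd h0 hd; omega

/-- For positive integers `m ≤ n` and non-negative integers
`a_1, …, a_n` with `∑ a_i = n`, we have
`∑_{j=1}^{n-m+1} a_j a_{j+1} ⋯ a_{j+m-1} ≤ (n/m)^m` (over the reals). -/
theorem stmt_0 (n m : ℕ) (hm : 0 < m) (hmn : m ≤ n) (a : ℕ → ℕ)
    (hsum : ∑ i ∈ Finset.Icc 1 n, a i = n) :
    ∑ j ∈ Finset.Icc 1 (n - m + 1), ∏ i ∈ Finset.Ico j (j + m), (a i : ℝ)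
      ≤ ((n : ℝ) / (m : ℝ)) ^ m := by
  classical
  set c : ℕ → ℕ → ℕ := fun j r => j + ((r + m - j % m) % m) with hc
  have hclt : ∀ j r, c j r < j + m := by
    intro j r
    have : (r + m - j % m) % m < m := Nat.mod_lt _ hm
    simp only [hc]; omega
  have hcge : ∀ j r, j ≤ c j r := fun j r => Nat.le_add_right _ _
  have hcmod : ∀ j r, r < m → (c j r) % m = r := fun j r hr => aux_mod m j r hm hr
  have hcself : ∀ j, c j (j % m) = j := by
    intro j
    have h2 : j % m ≤ j := Nat.mod_le _ _
    have h : j % m + m - j % m = m := by omega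
    simp only [hc, h, Nat.mod_self, add_zero]
  set F : Fin m → ℕ → ℝ := fun r i => if i % m = (r : ℕ) then (a i : ℝ) else 0 with hF
  set G : ℕ → (Fin m → ℕ) := fun j r => c j (r : ℕ) with hG
  have hFnn : ∀ r i, 0 ≤ F r i := by
    intro r i; simp only [hF]; split
    · exact Nat.cast_nonneg _
    · exact le_refl 0
  -- Step A : window product equals product over residues
  have stepA : ∀ j, ∏ i ∈ Finset.Ico j (j + m), (a i : ℝ) = ∏ r : Fin m, F r (G j r) := by
    intro j
    refine (Finset.prod_bij (fun (r : Fin m) _ => G j r) ?_ ?_ ?_ ?_).symm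
    · intro r _
      rw [Finset.mem_Ico]
      exact ⟨hcge j r, hclt j r⟩
    · intro r _ r' _ h
      have h1 := hcmod j r r.isLt
      have h2 := hcmod j r' r'.isLt
      apply Fin.ext
      rw [← h1, ← h2]
      simp only [hG] at h
      rw [h]
    · intro b hb
      rw [Finset.mem_Ico] at hb
      refine ⟨⟨b % m, Nat.mod_lt _ hm⟩, Finset.mem_univ _, ?_⟩
      have h1 := hcmod j (b % m) (Nat.mod_lt _ hm)
      exact (aux_uniq m j (c j (b % m)) b (hcge _ _) (hclt _ _) hb.1 hb.2 h1)
    · intro r _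
      simp [hF, hG, hcmod j (r : ℕ) r.isLt]
  -- injectivity of G
  have hGinj : ∀ j ∈ Finset.Icc 1 (n - m + 1), ∀ j' ∈ Finset.Icc 1 (n - m + 1),
      G j = G j' → j = j' := by
    intro j _ j' _ h
    have e1 : c j (j % m) = c j' (j % m) := congrFun h ⟨j % m, Nat.mod_lt _ hm⟩
    have e2 : c j (j' % m) = c j' (j' % m) := congrFun h ⟨j' % m, Nat.mod_lt _ hm⟩
    have h1 := hcself j
    have h2 := hcself j'
    have h3 := hcge j' (j % m)
    have h4 := hcge j (j' % m)
    omega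
  -- image is inside the pi finset
  have hsub : (Finset.Icc 1 (n - m + 1)).image G ⊆
      Fintype.piFinset (fun _ : Fin m => Finset.Icc 1 n) := by
    intro g hg
    rw [Finset.mem_image] at hg
    obtain ⟨j, hj, rfl⟩ := hg
    rw [Finset.mem_Icc] at hj
    rw [Fintype.mem_piFinset]
    intro r
    rw [Finset.mem_Icc]
    have h1 : j ≤ G j r := hcge j (r : ℕ)
    have h2 : G j r < j + m := hclt j (r : ℕ)
    constructor <;> omega
  -- the residue class sums
  set S : Fin m → ℝ := fun r => ∑ i ∈ Finset.Icc 1 n, F r i with hS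
  have hSnn : ∀ r : Fin m, 0 ≤ S r := fun r =>
    Finset.sum_nonneg fun i _ => hFnn r i
  have hinner : ∀ i, ∑ r : Fin m, F r i = (a i : ℝ) := by
    intro i
    rw [Finset.sum_eq_single_of_mem (⟨i % m, Nat.mod_lt _ hm⟩ : Fin m) (Finset.mem_univ _)]
    · simp [hF]
    · intro r _ hne
      simp only [hF]
      rw [if_neg]
      intro h
      exact hne (Fin.ext (by simp [← h]))
  have hSsum : ∑ r : Fin m, S r = (n : ℝ) := by
    simp only [hS]
    rw [Finset.sum_comm]
    calc ∑ i ∈ Finset.Icc 1 n, ∑ r : Fin m, F r i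
        = ∑ i ∈ Finset.Icc 1 n, (a i : ℝ) := Finset.sum_congr rfl fun i _ => hinner i
      _ = (n : ℝ) := by exact_mod_cast congrArg (Nat.cast : ℕ → ℝ) hsum
  have hmR : (0 : ℝ) < (m : ℝ) := by exact_mod_cast hm
  -- main chain
  have chain : ∑ j ∈ Finset.Icc 1 (n - m + 1), ∏ i ∈ Finset.Ico j (j + m), (a i : ℝ)
      ≤ ∏ r : Fin m, S r := by
    calc ∑ j ∈ Finset.Icc 1 (n - m + 1), ∏ i ∈ Finset.Ico j (j + m), (a i : ℝ)
        = ∑ j ∈ Finset.Icc 1 (n - m + 1), ∏ r : Fin m, F r (G j r) :=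
          Finset.sum_congr rfl fun j _ => stepA j
      _ = ∑ g ∈ (Finset.Icc 1 (n - m + 1)).image G, ∏ r : Fin m, F r (g r) :=
          by rw [Finset.sum_image hGinj]
      _ ≤ ∑ g ∈ Fintype.piFinset (fun _ : Fin m => Finset.Icc 1 n), ∏ r : Fin m, F r (g r) :=
          Finset.sum_le_sum_of_subset_of_nonneg hsub
            (fun g _ _ => Finset.prod_nonneg fun r _ => hFnn r (g r))
      _ = ∏ r : Fin m, S r := (Finset.prod_univ_sum _ _).symm
  refine chain.trans ?_
  -- AM-GM
  have hgm := Real.geom_mean_le_arith_mean_weighted Finset.univ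
    (fun _ : Fin m => 1 / (m : ℝ)) S (fun _ _ => by positivity)
    (by rw [Finset.sum_const, Finset.card_univ, Fintype.card_fin, nsmul_eq_mul]; field_simp)
    (fun r _ => hSnn r)
  have hrhs : ∑ r : Fin m, 1 / (m : ℝ) * S r = (n : ℝ) / (m : ℝ) := by
    rw [← Finset.mul_sum, hSsum]; ring
  rw [hrhs] at hgm
  have key : ∏ r : Fin m, S r = (∏ r : Fin m, S r ^ (1 / (m : ℝ))) ^ m := by
    rw [← Finset.prod_pow]
    refine Finset.prod_congr rfl fun r _ => ?_
    rw [← Real.rpow_natCast (S r ^ (1 / (m : ℝ))) m, ← Real.rpow_mul (hSnn r)]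
    rw [one_div, inv_mul_cancel₀ (ne_of_gt hmR), Real.rpow_one]
  rw [key]
  exact pow_le_pow_left₀ (Finset.prod_nonneg fun r _ => Real.rpow_nonneg (hSnn r) _) hgm m
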